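/- Let P be a convex polygon, e an edge of P, and p a point strictly on the outer side of the line supporting e but with p ∉ P. If the segment from p to its closest point on e meets the interior of P, then this segment crosses another edge e' of P, and the Euclidean distance from p to e' is strictly smaller than the Euclidean distance from p to e. -/

import Mathlib

set_option maxHeartbeats 1000000

open Metric

noncomputable section

abbrev Pt := EuclideanSpace ℝ (Fin 2)

/-- 2D orientation determinant. -/
def det2 (x y : Pt) : ℝ := x 0 * y 1 - x 1 * y 0

lemma det2_smul_right (a : Pt) (c : ℝ) (b : Pt) : det2 a (c • b) = c * det2 a b := by
  simp [det2]; ring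
lemma det2_smul_left (a : Pt) (c : ℝ) (b : Pt) : det2 (c • b) a = c * det2 b a := by
  simp [det2]; ring
lemma det2_sub_right (a b c : Pt) : det2 a (b - c) = det2 a b - det2 a c := by
  simp [det2]; ring
lemma det2_add_right (a b c : Pt) : det2 a (b + c) = det2 a b + det2 a c := by
  simp [det2]; ring
lemma det2_swap (a b : Pt) : det2 a b = - det2 b a := by simp [det2]; ring
lemma det2_self (a : Pt) : det2 a a = 0 := by simp [det2]; ring
lemma det2_zero_left (a : Pt) : det2 (0 : Pt) a = 0 := by simp [det2]

lemma pt_decomp (y : Pt) :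
    y = y 0 • (EuclideanSpace.single 0 (1:ℝ)) + y 1 • (EuclideanSpace.single 1 (1:ℝ)) := by
  ext i
  fin_cases i <;> simp [EuclideanSpace.single_apply]

lemma pt_ne_zero {w : Pt} (h : w ≠ 0) : w 0 ≠ 0 ∨ w 1 ≠ 0 := by
  by_contra hc
  push_neg at hc
  exact h (by ext i; fin_cases i <;> simp [hc.1, hc.2])

lemma ker_det2 {w : Pt} (hw : w ≠ 0) {z : Pt} (hz : det2 w z = 0) : ∃ c : ℝ, z = c • w := by
  have h : w 0 * z 1 - w 1 * z 0 = 0 := hz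
  rcases pt_ne_zero hw with h0 | h1
  · refine ⟨z 0 / w 0, ?_⟩
    ext i
    fin_cases i <;> simp <;> field_simp <;> nlinarith [h]
  · refine ⟨z 1 / w 1, ?_⟩
    ext i
    fin_cases i <;> simp <;> field_simp <;> nlinarith [h]

lemma mem_seg (x w : Pt) {a b : ℝ} (hb : b ≤ 0) (ha : 0 ≤ a) :
    x ∈ segment ℝ (x + a • w) (x + b • w) := by
  rcases eq_or_lt_of_le (sub_nonneg.2 (hb.trans ha)) with h | h
  · have ha0 : a = 0 := le_antisymm (by linarith) ha
    have hb0 : b = 0 := by linarith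
    subst ha0; subst hb0
    simpa using left_mem_segment ℝ x x
  · refine ⟨-b / (a - b), a / (a - b), div_nonneg (neg_nonneg.2 hb) h.le,
      div_nonneg ha h.le, by field_simp; ring, ?_⟩
    match_scalars <;> field_simp <;> ring

open Fin.NatCast in
lemma frontier_mem_edge (n : ℕ) [NeZero n] (v : Fin n → Pt)
    (hccw : ∀ i j : Fin n, 0 ≤ det2 (v (i + 1) - v i) (v j - v i))
    (hint : (interior (convexHull ℝ (Set.range v))).Nonempty)
    {x : Pt} (hx : x ∈ convexHull ℝ (Set.range v))
    (hxi : x ∉ interior (convexHull ℝ (Set.range v))) :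
    ∃ j : Fin n, x ∈ segment ℝ (v j) (v (j + 1)) := by
  by_contra hG
  push_neg at hG
  set P := convexHull ℝ (Set.range v) with hP
  have hPc : Convex ℝ P := convex_convexHull ℝ _
  obtain ⟨a, ha⟩ := hint
  obtain ⟨f, hfa⟩ := geometric_hahn_banach_open_point hPc.interior isOpen_interior hxi
  have hfax : f a < f x := hfa a ha
  -- f y ≤ f x on P
  have hfle : ∀ y ∈ P, f y ≤ f x := by
    intro y hy
    by_contra hc
    push_neg at hc
    have hyafx : f a < f y := hfax.trans hc
    have ht : (f y - f x) / (2 * (f y - f a)) ∈ Set.Ioc (0:ℝ) 1 := by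
      constructor
      · apply div_pos (by linarith) (by linarith)
      · rw [div_le_one (by linarith)]; linarith
    have hin := hPc.add_smul_sub_mem_interior hy ha ht
    have := hfa _ hin
    rw [map_add, map_smul, map_sub, smul_eq_mul] at this
    have hne : f y - f a ≠ 0 := by linarith
    have hcc : (f y - f x) / (2 * (f y - f a)) * (f a - f y) = -(f y - f x) / 2 := by
      field_simp
      ring
    rw [hcc] at this
    linarith
  have hvle : ∀ j : Fin n, f (v j) ≤ f x := fun j =>
    hfle _ (subset_convexHull ℝ _ ⟨j, rfl⟩)
  -- representation of f as det2 w ·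
  set e0 : Pt := EuclideanSpace.single 0 (1:ℝ) with he0
  set e1 : Pt := EuclideanSpace.single 1 (1:ℝ) with he1
  set w : Pt := (f e1) • e0 - (f e0) • e1 with hw
  have hrep : ∀ y : Pt, f y = det2 w y := by
    intro y
    have hd := pt_decomp y
    calc f y = f (y 0 • e0 + y 1 • e1) := by rw [← hd]
    _ = y 0 * f e0 + y 1 * f e1 := by
        rw [map_add, map_smul, map_smul, smul_eq_mul, smul_eq_mul]
    _ = det2 w y := by
        simp [det2, hw, he0, he1, EuclideanSpace.single_apply]
        ring
  have hwne : w ≠ 0 := by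
    intro h
    rw [hrep a, hrep x, h, det2_zero_left, det2_zero_left] at hfax
    exact lt_irrefl _ hfax
  -- parameters t
  have hker : ∀ j : Fin n, f (v j) = f x → ∃ c : ℝ, v j - x = c • w := by
    intro j hj
    apply ker_det2 hwne
    have h1 : det2 w (v j - x) = f (v j - x) := (hrep _).symm
    rw [map_sub, hj, sub_self] at h1
    exact h1
  choose! t ht using hker
  -- strictly lower vertex exists
  have hbelow : ∃ mm : Fin n, f (v mm) < f x := by
    by_contra hc
    push_neg at hc
    have hall : ∀ j, f (v j) = f x := fun j => le_antisymm (hvle j) (hc j)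
    have hsub : P ⊆ {y | f y = f x} := by
      apply convexHull_min
      · rintro y ⟨j, rfl⟩; exact hall j
      · exact convex_hyperplane (f.toLinearMap.isLinear) (f x)
    have := hsub (interior_subset ha)
    simp only [Set.mem_setOf_eq] at this
    rw [this] at hfax
    exact lt_irrefl _ hfax
  -- if t j = 0 on a face vertex, x is that vertex
  have htne : ∀ j : Fin n, f (v j) = f x → t j ≠ 0 := by
    intro j hj h0
    have h1 := ht j hj
    rw [h0, zero_smul, sub_eq_zero] at h1
    exact hG j (h1 ▸ left_mem_segment ℝ (v j) (v (j + 1)))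
  -- convex combination representation of x
  have hx' := hx
  rw [hP, convexHull_range_eq_exists_affineCombination] at hx'
  obtain ⟨s, lam, hlam0, hlam1, hcomb⟩ := hx'
  rw [Finset.affineCombination_eq_linear_combination _ _ _ hlam1] at hcomb
  -- face argument
  have hface : ∀ j ∈ s, lam j ≠ 0 → f (v j) = f x := by
    have h1 : ∑ j ∈ s, lam j * f (v j) = f x := by
      have : f (∑ j ∈ s, lam j • v j) = ∑ j ∈ s, lam j * f (v j) := by
        rw [map_sum]; exact Finset.sum_congr rfl fun j _ => by rw [map_smul, smul_eq_mul]
      rw [← this, hcomb]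
    have hsum : ∑ j ∈ s, lam j * (f x - f (v j)) = 0 := by
      have h2 : ∑ j ∈ s, lam j * f x = f x := by
        rw [← Finset.sum_mul, hlam1, one_mul]
      calc ∑ j ∈ s, lam j * (f x - f (v j))
          = ∑ j ∈ s, (lam j * f x - lam j * f (v j)) := by
            exact Finset.sum_congr rfl fun j _ => by ring
        _ = 0 := by rw [Finset.sum_sub_distrib, h1, h2, sub_self]
    intro j hj hjne
    have hterm := (Finset.sum_eq_zero_iff_of_nonneg
      (fun k hk => mul_nonneg (hlam0 k hk) (sub_nonneg.2 (hvle k)))).1 hsum j hj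
    have := mul_eq_zero.1 hterm
    rcases this with h | h
    · exact absurd h hjne
    · linarith [sub_eq_zero.1 h]
  -- sum of weighted parameters vanishes
  have hxsum : ∑ j ∈ s, lam j • (v j - x) = (0 : Pt) := by
    have : ∑ j ∈ s, lam j • (v j - x) = (∑ j ∈ s, lam j • v j) - (∑ j ∈ s, lam j) • x := by
      rw [Finset.sum_smul]
      rw [← Finset.sum_sub_distrib]
      exact Finset.sum_congr rfl fun j _ => by rw [smul_sub]
    rw [this, hcomb, hlam1, one_smul, sub_self]
  have hscal : ∑ j ∈ s, lam j * t j = 0 := by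
    have hterm : ∀ j ∈ s, lam j • (v j - x) = (lam j * t j) • w := by
      intro j hj
      rcases eq_or_ne (lam j) 0 with h | h
      · rw [h, zero_smul, zero_mul, zero_smul]
      · rw [ht j (hface j hj h), smul_smul]
    have : ∑ j ∈ s, (lam j * t j) • w = (0 : Pt) := by
      rw [← Finset.sum_congr rfl hterm, hxsum]
    rw [← Finset.sum_smul] at this
    rcases smul_eq_zero.1 this with h | h
    · exact h
    · exact absurd h hwne
  have hlamex : ∃ j ∈ s, lam j ≠ 0 :=
    Finset.exists_ne_zero_of_sum_ne_zero (by rw [hlam1]; exact one_ne_zero)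
  -- exists face vertex with negative parameter
  have hexneg : ∃ j : Fin n, f (v j) = f x ∧ t j < 0 := by
    by_contra hc
    push_neg at hc
    have hpos : ∀ j ∈ s, lam j ≠ 0 → 0 < t j := by
      intro j hj hne
      have hFj := hface j hj hne
      rcases lt_trichotomy (t j) 0 with h | h | h
      · linarith [hc j hFj]
      · exact absurd h (htne j hFj)
      · exact h
    have : 0 < ∑ j ∈ s, lam j * t j := by
      obtain ⟨j0, hj0, hj0ne⟩ := hlamex
      apply Finset.sum_pos'
      · intro k hk
        rcases eq_or_ne (lam k) 0 with h | h
        · rw [h, zero_mul]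
        · exact (mul_pos ((hlam0 k hk).lt_of_ne (Ne.symm h)) (hpos k hk h)).le
      · exact ⟨j0, hj0, mul_pos ((hlam0 j0 hj0).lt_of_ne (Ne.symm hj0ne)) (hpos j0 hj0 hj0ne)⟩
    rw [hscal] at this
    exact lt_irrefl _ this
  have hexpos : ∃ j : Fin n, f (v j) = f x ∧ 0 < t j := by
    by_contra hc
    push_neg at hc
    have hneg : ∀ j ∈ s, lam j ≠ 0 → t j < 0 := by
      intro j hj hne
      have hFj := hface j hj hne
      rcases lt_trichotomy (t j) 0 with h | h | h
      · exact h
      · exact absurd h (htne j hFj)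
      · linarith [hc j hFj]
    have : ∑ j ∈ s, lam j * t j < 0 := by
      obtain ⟨j0, hj0, hj0ne⟩ := hlamex
      have : 0 < ∑ j ∈ s, lam j * (-(t j)) := by
        apply Finset.sum_pos'
        · intro k hk
          rcases eq_or_ne (lam k) 0 with h | h
          · rw [h, zero_mul]
          · exact (mul_pos ((hlam0 k hk).lt_of_ne (Ne.symm h))
              (neg_pos.2 (hneg k hk h))).le
        · exact ⟨j0, hj0, mul_pos ((hlam0 j0 hj0).lt_of_ne (Ne.symm hj0ne))
            (neg_pos.2 (hneg j0 hj0 hj0ne))⟩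
      have heq : ∑ j ∈ s, lam j * (-(t j)) = -(∑ j ∈ s, lam j * t j) := by
        rw [← Finset.sum_neg_distrib]
        exact Finset.sum_congr rfl fun j _ => by ring
      linarith [heq ▸ this]
    rw [hscal] at this
    exact lt_irrefl _ this
  obtain ⟨jneg, hjnegF, hjnegt⟩ := hexneg
  obtain ⟨jpos, hjposF, hjpost⟩ := hexpos
  obtain ⟨mm, hmm⟩ := hbelow
  -- induction step
  have step : ∀ j : Fin n, f (v j) = f x → 0 < t j →
      f (v (j + 1)) = f x ∧ 0 < t (j + 1) := by
    intro j hjF hjpos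
    have hvj : v j = x + t j • w := by
      have := ht j hjF
      rw [sub_eq_iff_eq_add] at this
      rw [this]; abel
    -- det2 u w ≤ 0
    have hdiff : v jneg - v j = (t jneg - t j) • w := by
      have h1 := ht jneg hjnegF
      have h2 := ht j hjF
      have : v jneg - v j = (v jneg - x) - (v j - x) := by abel
      rw [this, h1, h2, ← sub_smul]
    have hA : det2 (v (j + 1) - v j) w ≤ 0 := by
      have h0 := hccw j jneg
      rw [hdiff, det2_smul_right] at h0
      nlinarith
    -- f on v (j+1)
    have hfu : f (v (j + 1)) - f (v j) = det2 w (v (j + 1) - v j) := by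
      rw [← map_sub, hrep]
    have hge : 0 ≤ f (v (j + 1)) - f (v j) := by
      rw [hfu, det2_swap]; linarith
    have hFj1 : f (v (j + 1)) = f x := by
      have := hvle (j + 1)
      rw [hjF] at hge
      linarith
    -- t (j+1) ≤ t j
    have hu : v (j + 1) - v j = (t (j + 1) - t j) • w := by
      have h1 := ht (j + 1) hFj1
      have h2 := ht j hjF
      have : v (j + 1) - v j = (v (j + 1) - x) - (v j - x) := by abel
      rw [this, h1, h2, ← sub_smul]
    have hmneg : det2 w (v mm - v j) < 0 := by
      have : det2 w (v mm - v j) = f (v mm) - f (v j) := by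
        rw [← hrep, map_sub]
      rw [this, hjF]
      linarith
    have hle : t (j + 1) ≤ t j := by
      have h0 := hccw j mm
      rw [hu, det2_smul_left] at h0
      nlinarith
    refine ⟨hFj1, ?_⟩
    by_contra hc
    push_neg at hc
    have hvj1 : v (j + 1) = x + t (j + 1) • w := by
      have := ht (j + 1) hFj1
      rw [sub_eq_iff_eq_add] at this
      rw [this]; abel
    exact hG j (hvj ▸ hvj1 ▸ mem_seg x w hc hjpos.le)
  -- iterate around the polygon
  have hiter : ∀ m : ℕ, f (v (jpos + (m : Fin n))) = f x ∧ 0 < t (jpos + (m : Fin n)) := by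
    intro m
    induction m with
    | zero => simpa using ⟨hjposF, hjpost⟩
    | succ k ihk =>
      have h2 := step _ ihk.1 ihk.2
      have hcast : (jpos + ((k + 1 : ℕ) : Fin n)) = (jpos + (k : Fin n)) + 1 := by
        push_cast
        abel
      rw [hcast]
      exact h2
  have hfinal := (hiter ((jneg - jpos : Fin n)).val).2
  rw [Fin.cast_val_eq_self, add_comm, sub_add_cancel] at hfinal
  linarith

theorem crossing_edge_closer
    (n : ℕ) [NeZero n] (hn : 3 ≤ n) (v : Fin n → Pt)
    (hccw : ∀ i j : Fin n, 0 ≤ det2 (v (i + 1) - v i) (v j - v i))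
    (hint : (interior (convexHull ℝ (Set.range v))).Nonempty)
    (i : Fin n) (p q : Pt)
    (hp : p ∉ convexHull ℝ (Set.range v))
    (hleft : 0 < det2 (v (i + 1) - v i) (p - v i))
    (hq : q ∈ segment ℝ (v i) (v (i + 1)))
    (hqmin : ∀ x ∈ segment ℝ (v i) (v (i + 1)), dist p q ≤ dist p x)
    (hmeet : (segment ℝ p q ∩ interior (convexHull ℝ (Set.range v))).Nonempty) :
    ∃ j : Fin n, j ≠ i ∧
      (segment ℝ p q ∩ segment ℝ (v j) (v (j + 1))).Nonempty ∧
      infDist p (segment ℝ (v j) (v (j + 1))) <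
        infDist p (segment ℝ (v i) (v (i + 1))) := by
  set P := convexHull ℝ (Set.range v) with hP
  have hPc : Convex ℝ P := convex_convexHull ℝ _
  have hPclosed : IsClosed P := (Set.finite_range v).isClosed_convexHull ℝ
  obtain ⟨m, hmseg, hmint⟩ := hmeet
  have hmP : m ∈ P := interior_subset hmint
  have hqP : q ∈ P := hPc.segment_subset
    (subset_convexHull ℝ _ ⟨i, rfl⟩) (subset_convexHull ℝ _ ⟨i + 1, rfl⟩) hq
  have hpq : p ≠ q := fun h => hp (h ▸ hqP)
  set u : Pt := v (i + 1) - v i with hu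
  have hune : u ≠ 0 := by
    intro h
    rw [h, det2_zero_left] at hleft
    exact lt_irrefl _ hleft
  -- half-plane containing P
  have hhalfconv : Convex ℝ {y : Pt | 0 ≤ det2 u (y - v i)} := by
    intro y hy z hz a b ha hb hab
    simp only [Set.mem_setOf_eq] at *
    have hsplit : a • y + b • z - v i = a • (y - v i) + b • (z - v i) := by
      match_scalars <;> linarith
    rw [hsplit, det2_add_right, det2_smul_right, det2_smul_right]
    have := mul_nonneg ha hy
    have := mul_nonneg hb hz
    linarith
  have hhalf : ∀ y ∈ P, 0 ≤ det2 u (y - v i) := by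
    intro y hy
    have hsub : P ⊆ {y : Pt | 0 ≤ det2 u (y - v i)} := by
      apply convexHull_min _ hhalfconv
      rintro z ⟨j, rfl⟩
      exact hccw i j
    exact hsub hy
  -- q is on the boundary line
  obtain ⟨aq, bq, haq, hbq, habq, hq'⟩ := hq
  have hqvi : q - v i = bq • u := by
    rw [← hq', hu]
    match_scalars <;> linarith
  have hdetq : det2 u (q - v i) = 0 := by
    rw [hqvi, det2_smul_right, det2_self, mul_zero]
  -- q is not interior
  have hqni : q ∉ interior P := by
    intro hqi
    rw [mem_interior_iff_mem_nhds, Metric.mem_nhds_iff] at hqi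
    obtain ⟨ε, hε, hball⟩ := hqi
    set z : Pt := (-(u 1)) • EuclideanSpace.single 0 (1:ℝ)
      + (u 0) • EuclideanSpace.single 1 (1:ℝ) with hz
    have hdz : det2 u z = u 0 * u 0 + u 1 * u 1 := by
      simp [det2, hz, EuclideanSpace.single_apply]
    have hdzpos : 0 < det2 u z := by
      rw [hdz]
      rcases pt_ne_zero hune with h | h
      · have := mul_self_pos.2 h
        nlinarith [mul_self_nonneg (u 1)]
      · have := mul_self_pos.2 h
        nlinarith [mul_self_nonneg (u 0)]
    set δ : ℝ := ε / (‖z‖ + 1) with hδ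
    have hδpos : 0 < δ := by positivity
    have hmem : q - δ • z ∈ Metric.ball q ε := by
      rw [mem_ball, dist_eq_norm]
      have heq : q - δ • z - q = -(δ • z) := by abel
      rw [heq, norm_neg, norm_smul, Real.norm_eq_abs, abs_of_pos hδpos]
      rw [hδ, div_mul_eq_mul_div, div_lt_iff₀ (by positivity)]
      nlinarith [norm_nonneg z]
    have hPz := hhalf _ (hball hmem)
    have heq2 : q - δ • z - v i = (q - v i) - δ • z := by abel
    rw [heq2, det2_sub_right, hdetq, det2_smul_right] at hPz
    nlinarith
  have hmq : m ≠ q := fun h => hqni (h ▸ hmint)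
  -- crossing point on the frontier
  have hcross : ∃ x' ∈ segment ℝ m p, x' ∈ P ∧ x' ∉ interior P := by
    by_contra hc
    push_neg at hc
    have hsub : segment ℝ m p ⊆ interior P ∪ Pᶜ := by
      intro y hy
      by_cases hyP : y ∈ P
      · exact Or.inl (hc y hy hyP)
      · exact Or.inr hyP
    have hdisj : Disjoint (interior P) Pᶜ :=
      (disjoint_compl_right).mono_left interior_subset
    rcases (convex_segment m p).isPreconnected.subset_or_subset
        isOpen_interior hPclosed.isOpen_compl hdisj hsub with h | h
    · exact hp (interior_subset (h (right_mem_segment ℝ m p)))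
    · exact (h (left_mem_segment ℝ m p)) hmP
  obtain ⟨x', hx'seg, hx'P, hx'ni⟩ := hcross
  obtain ⟨j, hj⟩ := frontier_mem_edge n v hccw hint hx'P hx'ni
  have hx'pq : x' ∈ segment ℝ p q :=
    (convex_segment p q).segment_subset hmseg (left_mem_segment ℝ p q) hx'seg
  -- dist p m < dist p q
  obtain ⟨am, bm, ham, hbm, habm, hm'⟩ := hmseg
  have hbm1 : bm < 1 := by
    rcases lt_or_eq_of_le (by linarith : bm ≤ 1) with h | h
    · exact h
    · exfalso
      apply hmq
      have ham0 : am = 0 := by linarith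
      rw [← hm', ham0, h, zero_smul, one_smul, zero_add]
  have hmp : m - p = bm • (q - p) := by
    rw [← hm']
    match_scalars <;> linarith
  have hdm : dist p m = bm * dist p q := by
    calc dist p m = ‖m - p‖ := by rw [dist_comm, dist_eq_norm]
    _ = |bm| * ‖q - p‖ := by rw [hmp, norm_smul, Real.norm_eq_abs]
    _ = bm * dist p q := by rw [abs_of_nonneg hbm, dist_comm, dist_eq_norm]
  have hdpq_pos : 0 < dist p q := dist_pos.2 hpq
  have hdmq : dist p m < dist p q := by
    rw [hdm]; nlinarith
  -- dist p x' ≤ dist p m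
  have hdx : dist p x' ≤ dist p m := by
    have hsub : segment ℝ m p ⊆ closedBall p (dist p m) := by
      apply (convex_closedBall p (dist p m)).segment_subset
      · rw [mem_closedBall, dist_comm]
      · rw [mem_closedBall, dist_self]
        exact dist_nonneg
    have := hsub hx'seg
    rwa [mem_closedBall, dist_comm] at this
  -- infDist computations
  have hqseg : q ∈ segment ℝ (v i) (v (i + 1)) := ⟨aq, bq, haq, hbq, habq, hq'⟩
  have hinf_i : infDist p (segment ℝ (v i) (v (i + 1))) = dist p q := by
    apply le_antisymm (infDist_le_dist_of_mem hqseg)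
    by_contra hc
    push_neg at hc
    obtain ⟨y, hy, hylt⟩ := (infDist_lt_iff ⟨q, hqseg⟩).1 hc
    exact absurd hylt (not_lt.2 (hqmin y hy))
  have hinf_j : infDist p (segment ℝ (v j) (v (j + 1))) ≤ dist p x' :=
    infDist_le_dist_of_mem hj
  have hlt : infDist p (segment ℝ (v j) (v (j + 1))) <
      infDist p (segment ℝ (v i) (v (i + 1))) := by
    rw [hinf_i]
    linarith
  refine ⟨j, ?_, ⟨x', hx'pq, hj⟩, hlt⟩
  rintro rfl
  exact lt_irrefl _ hlt

end
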